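/- Let L be the symmetrically normalized adjacency of a strongly connected, weakly balanced directed graph with period h. Then −1 is an eigenvalue of L if and only if h is even. (In particular, for undirected connected graphs, −1 ∈ spec(L) iff the graph is bipartite.) -/

import Mathlib

open Matrix Finset

lemma aux_edge {N : ℕ} (A : Matrix (Fin N) (Fin N) ℝ) (hA0 : ∀ i j, 0 ≤ A i j)
    (s t c : Fin N → ℝ)
    (h1 : ∀ i, ∑ j, A i j * (s j - t i) = 0)
    (h2 : ∀ j, (∑ i, A i j) * (s j)^2 = c j)
    (h3 : ∀ i, (∑ j, A i j) * (t i)^2 = c i) :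
    ∀ i j, A i j ≠ 0 → s j = t i := by
  have hs : ∀ i, ∑ j, A i j * s j = (∑ j, A i j) * t i := by
    intro i
    have h1' : ∑ j, (A i j * s j - A i j * t i) = 0 := by
      simpa [mul_sub] using h1 i
    rw [Finset.sum_sub_distrib] at h1'
    rw [Finset.sum_mul]
    linarith [h1']
  have expand : ∀ i, ∑ j, A i j * (s j - t i)^2
      = ∑ j, A i j * (s j)^2 - (∑ j, A i j) * (t i)^2 := by
    intro i
    have e0 : ∀ j ∈ Finset.univ, A i j * (s j - t i)^2
        = A i j * (s j)^2 - 2 * (A i j * s j) * t i + A i j * (t i)^2 :=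
      fun j _ => by ring
    rw [Finset.sum_congr rfl e0, Finset.sum_add_distrib, Finset.sum_sub_distrib]
    have e2 : ∑ j, 2 * (A i j * s j) * t i = 2 * ((∑ j, A i j) * (t i)^2) := by
      rw [← Finset.sum_mul, ← Finset.mul_sum, hs i]; ring
    have e3 : ∑ j, A i j * (t i)^2 = (∑ j, A i j) * (t i)^2 := by
      rw [Finset.sum_mul]
    rw [e2, e3]; ring
  have key : ∑ i, ∑ j, A i j * (s j - t i)^2 = 0 := by
    rw [Finset.sum_congr rfl (fun i _ => expand i), Finset.sum_sub_distrib]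
    have e4 : ∑ i, ∑ j, A i j * (s j)^2 = ∑ j, c j := by
      rw [Finset.sum_comm]
      exact Finset.sum_congr rfl fun j _ => by rw [← h2 j, Finset.sum_mul]
    have e5 : ∑ i, (∑ j, A i j) * (t i)^2 = ∑ i, c i := by
      exact Finset.sum_congr rfl fun i _ => h3 i
    rw [e4, e5, sub_self]
  have hz : ∀ i ∈ Finset.univ, ∑ j, A i j * (s j - t i)^2 = 0 := by
    intro i _
    have := (Finset.sum_eq_zero_iff_of_nonneg
      (fun i _ => Finset.sum_nonneg fun j _ => mul_nonneg (hA0 i j) (sq_nonneg _))).mp key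
    exact this i (Finset.mem_univ i)
  intro i j hij
  have hz2 := (Finset.sum_eq_zero_iff_of_nonneg
    (fun j _ => mul_nonneg (hA0 i j) (sq_nonneg _))).mp (hz i (Finset.mem_univ i)) j
    (Finset.mem_univ j)
  rcases mul_eq_zero.mp hz2 with h' | h'
  · exact absurd h' hij
  · have := pow_eq_zero_iff (n := 2) (by norm_num) |>.mp h'
    linarith [sub_eq_zero.mp this]

/-- Let `L` be the symmetrically normalized adjacency of a
strongly connected (irreducible), weakly balanced directed graph with period
`h` (the gcd of the lengths of all directed cycles, characterized here via
return times: `h` is the gcd of `{m > 0 : (A^m)_{ii} > 0}` for each node `i`).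
Then `−1` is an eigenvalue of `L` if and only if `h` is even. -/
theorem neg_one_eigenvalue_iff_even_period {N : ℕ}
    (A : Matrix (Fin N) (Fin N) ℝ)
    (hA : ∀ i j, A i j = 0 ∨ A i j = 1)
    -- strong connectivity
    (hstrong : ∀ i j : Fin N, ∃ m : ℕ, 0 < m ∧ 0 < (A ^ m) i j)
    (din dout : Fin N → ℝ)
    (hdin : ∀ i, din i = ∑ j, A i j)
    (hdout : ∀ j, dout j = ∑ i, A i j)
    (hdin_pos : ∀ i, 0 < din i) (hdout_pos : ∀ j, 0 < dout j)
    (L : Matrix (Fin N) (Fin N) ℝ)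
    (hL : ∀ i j, L i j = A i j / (Real.sqrt (din i) * Real.sqrt (dout j)))
    -- weakly balanced
    (hwb : ∃ k : Fin N → ℝ, k ≠ 0 ∧ ∀ i,
      ∑ j, A i j * (k j / Real.sqrt (dout j) - k i / Real.sqrt (din i)) = 0)
    -- `h` is the period: the gcd of the return times at every node
    (h : ℕ) (hh0 : 0 < h)
    (hper : ∀ i : Fin N,
      (∀ m : ℕ, 0 < m → 0 < (A ^ m) i i → h ∣ m) ∧
      (∀ d : ℕ, (∀ m : ℕ, 0 < m → 0 < (A ^ m) i i → d ∣ m) → d ∣ h)) :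
    (∃ v : Fin N → ℝ, v ≠ 0 ∧ L.mulVec v = (-1 : ℝ) • v) ↔ Even h := by
  have hA0 : ∀ i j, 0 ≤ A i j := fun i j => by rcases hA i j with h' | h' <;> simp [h']
  have hpow0 : ∀ m (i j : Fin N), 0 ≤ (A ^ m) i j := by
    intro m
    induction m with
    | zero => intro i j; simp [Matrix.one_apply]; split <;> norm_num
    | succ m ih =>
      intro i j
      rw [pow_succ, Matrix.mul_apply]
      exact Finset.sum_nonneg fun l _ => mul_nonneg (ih i l) (hA0 l j)
  have hstep : ∀ m (i j : Fin N), 0 < (A ^ (m+1)) i j →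
      ∃ l, 0 < (A ^ m) i l ∧ 0 < A l j := by
    intro m i j hpos
    rw [pow_succ, Matrix.mul_apply] at hpos
    by_contra hcon
    push_neg at hcon
    have hz : ∀ l ∈ Finset.univ, (A ^ m) i l * A l j = 0 := by
      intro l _
      rcases lt_or_eq_of_le (hpow0 m i l) with h1 | h1
      · have h2 : A l j = 0 := le_antisymm (hcon l h1) (hA0 l j)
        rw [h2, mul_zero]
      · rw [← h1, zero_mul]
    rw [Finset.sum_eq_zero hz] at hpos
    exact lt_irrefl 0 hpos
  have hcomp : ∀ (a b : ℕ) (x y z : Fin N), 0 < (A ^ a) x y → 0 < (A ^ b) y z →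
      0 < (A ^ (a + b)) x z := by
    intro a b x y z h1 h2
    rw [pow_add, Matrix.mul_apply]
    exact Finset.sum_pos' (fun l _ => mul_nonneg (hpow0 a x l) (hpow0 b l z))
      ⟨y, Finset.mem_univ y, mul_pos h1 h2⟩
  -- square root facts
  have hsdin : ∀ i, 0 < Real.sqrt (din i) := fun i => Real.sqrt_pos.mpr (hdin_pos i)
  have hsdout : ∀ j, 0 < Real.sqrt (dout j) := fun j => Real.sqrt_pos.mpr (hdout_pos j)
  have hsqdin : ∀ i, Real.sqrt (din i) ^ 2 = din i := fun i => Real.sq_sqrt (hdin_pos i).le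
  have hsqdout : ∀ j, Real.sqrt (dout j) ^ 2 = dout j := fun j => Real.sq_sqrt (hdout_pos j).le
  obtain ⟨k, hk0, hkbal⟩ := hwb
  -- edge relation for k
  have hkedge : ∀ i j, A i j ≠ 0 →
      k j / Real.sqrt (dout j) = k i / Real.sqrt (din i) := by
    apply aux_edge A hA0 _ _ (fun i => (k i)^2) hkbal
    · intro j
      rw [← hdout j, div_pow, hsqdout j]
      exact mul_div_cancel₀ _ (ne_of_gt (hdout_pos j))
    · intro i
      rw [← hdin i, div_pow, hsqdin i]
      exact mul_div_cancel₀ _ (ne_of_gt (hdin_pos i))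
  -- k never vanishes
  have hkzero : ∀ m (x y : Fin N), 0 < (A ^ m) x y → k x = 0 → k y = 0 := by
    intro m
    induction m with
    | zero =>
      intro x y hpos hx
      have : x = y := by
        by_contra hxy
        rw [pow_zero, Matrix.one_apply_ne hxy] at hpos
        exact lt_irrefl 0 hpos
      rwa [← this]
    | succ m ih =>
      intro x y hpos hx
      obtain ⟨l, h1, h2⟩ := hstep m x y hpos
      have hl : k l = 0 := ih x l h1 hx
      have := hkedge l y (ne_of_gt h2)
      rw [hl, zero_div] at this
      exact (div_eq_zero_iff.mp this).resolve_right (ne_of_gt (hsdout y))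
  have hknz : ∀ i, k i ≠ 0 := by
    intro i hki
    apply hk0
    funext j
    obtain ⟨m, _, hm⟩ := hstrong i j
    exact hkzero m i j hm hki
  -- L applied to k gives k
  have hLk : ∀ i, ∑ j, L i j * k j = k i := by
    intro i
    have e1 : ∑ j, A i j * (k j / Real.sqrt (dout j))
        = (∑ j, A i j) * (k i / Real.sqrt (din i)) := by
      have h1' : ∑ j, (A i j * (k j / Real.sqrt (dout j))
          - A i j * (k i / Real.sqrt (din i))) = 0 := by
        simpa [mul_sub] using hkbal i
      rw [Finset.sum_sub_distrib] at h1'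
      rw [Finset.sum_mul]
      linarith [h1']
    have e2 : ∀ j, L i j * k j = A i j * (k j / Real.sqrt (dout j)) / Real.sqrt (din i) := by
      intro j
      rw [hL i j]
      field_simp
    rw [Finset.sum_congr rfl (fun j _ => e2 j), ← Finset.sum_div, e1, ← hdin i]
    calc din i * (k i / Real.sqrt (din i)) / Real.sqrt (din i)
        = k i * (din i / (Real.sqrt (din i) * Real.sqrt (din i))) := by ring
      _ = k i := by
          rw [Real.mul_self_sqrt (hdin_pos i).le, div_self (ne_of_gt (hdin_pos i)), mul_one]
  constructor
  · -- −1 eigenvalue → h even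
    rintro ⟨v, hv0, hveq⟩
    have hvi : ∀ i, ∑ j, L i j * v j = -(v i) := by
      intro i
      have := congrFun hveq i
      simpa [Matrix.mulVec, dotProduct] using this
    have hvedge : ∀ i j, A i j ≠ 0 →
        v j / Real.sqrt (dout j) = -(v i) / Real.sqrt (din i) := by
      apply aux_edge A hA0 (fun j => v j / Real.sqrt (dout j))
        (fun i => -(v i) / Real.sqrt (din i)) (fun i => (v i)^2)
      · intro i
        have eA : ∀ j, A i j * (v j / Real.sqrt (dout j))
            = Real.sqrt (din i) * (L i j * v j) := by
          intro j; rw [hL i j]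
          field_simp [ne_of_gt (hsdin i), ne_of_gt (hsdout j)]
        have e1 : ∑ j, A i j * (v j / Real.sqrt (dout j))
            = Real.sqrt (din i) * -(v i) := by
          rw [Finset.sum_congr rfl fun j _ => eA j, ← Finset.mul_sum, hvi i]
        have e2 : ∑ j, A i j * (-(v i) / Real.sqrt (din i))
            = Real.sqrt (din i) * -(v i) := by
          rw [← Finset.sum_mul, ← hdin i]
          calc din i * (-(v i) / Real.sqrt (din i))
              = -(v i) * (din i / Real.sqrt (din i)) := by ring
            _ = Real.sqrt (din i) * -(v i) := by rw [Real.div_sqrt]; ring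
        have e3 : ∀ j ∈ Finset.univ,
            A i j * (v j / Real.sqrt (dout j) - -(v i) / Real.sqrt (din i))
            = A i j * (v j / Real.sqrt (dout j)) - A i j * (-(v i) / Real.sqrt (din i)) :=
          fun j _ => by ring
        rw [Finset.sum_congr rfl e3, Finset.sum_sub_distrib, e1, e2, sub_self]
      · intro j
        rw [← hdout j, div_pow, hsqdout j]
        exact mul_div_cancel₀ _ (ne_of_gt (hdout_pos j))
      · intro i
        rw [← hdin i, div_pow, neg_sq, hsqdin i]
        exact mul_div_cancel₀ _ (ne_of_gt (hdin_pos i))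
    have hredge : ∀ i j, A i j ≠ 0 → v j / k j = -(v i / k i) := by
      intro i j hij
      have e1 := hvedge i j hij
      have e2 := hkedge i j hij
      rw [div_eq_div_iff (ne_of_gt (hsdout j)) (ne_of_gt (hsdin i))] at e1 e2
      have goal' : v j * k i = -(v i) * k j := by
        have h0 : (v j * k i + v i * k j) * Real.sqrt (din i) = 0 := by
          linear_combination k i * e1 + v i * e2
        rcases mul_eq_zero.mp h0 with h' | h'
        · linarith
        · exact absurd h' (ne_of_gt (hsdin i))
      rw [← neg_div, div_eq_div_iff (hknz j) (hknz i)]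
      exact goal'
    have hrwalk : ∀ m (x y : Fin N), 0 < (A ^ m) x y →
        v y / k y = (-1:ℝ)^m * (v x / k x) := by
      intro m
      induction m with
      | zero =>
        intro x y hpos
        have hxy : x = y := by
          by_contra hxy
          rw [pow_zero, Matrix.one_apply_ne hxy] at hpos
          exact lt_irrefl 0 hpos
        rw [hxy, pow_zero, one_mul]
      | succ m ih =>
        intro x y hpos
        obtain ⟨l, h1, h2⟩ := hstep m x y hpos
        rw [hredge l y (ne_of_gt h2), ih x l h1, pow_succ]
        ring
    obtain ⟨i, hvi0⟩ := Function.ne_iff.mp hv0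
    have hri : v i / k i ≠ 0 := div_ne_zero hvi0 (hknz i)
    have h2dvd : ∀ m, 0 < m → 0 < (A ^ m) i i → 2 ∣ m := by
      intro m hm hpos
      have hr := hrwalk m i i hpos
      have hpow : (-1:ℝ)^m = 1 := by
        have h2 : ((-1:ℝ)^m - 1) * (v i / k i) = 0 := by linear_combination (-1:ℝ) * hr
        rcases mul_eq_zero.mp h2 with h' | h'
        · linarith
        · exact absurd h' hri
      by_contra hodd
      have hoddm : Odd m := Nat.odd_iff.mpr (by omega)
      rw [hoddm.neg_one_pow] at hpow
      norm_num at hpow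
    exact even_iff_two_dvd.mpr ((hper i).2 2 h2dvd)
  · -- h even → −1 eigenvalue
    intro hEven
    obtain ⟨i0, hi0⟩ := Function.ne_iff.mp hk0
    choose m hmpos hmA using hstrong i0
    have hpar : ∀ i j, A i j ≠ 0 → ((-1:ℝ))^(m j) = -((-1:ℝ))^(m i) := by
      intro i j hij
      obtain ⟨s, hs0, hsA⟩ := hstrong j i0
      have hedge : 0 < (A ^ 1) i j := by
        rw [pow_one]; exact lt_of_le_of_ne (hA0 i j) (Ne.symm hij)
      have c1 : 0 < (A ^ (m i + 1 + s)) i0 i0 :=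
        hcomp _ _ _ _ _ (hcomp _ _ _ _ _ (hmA i) hedge) hsA
      have c2 : 0 < (A ^ (m j + s)) i0 i0 := hcomp _ _ _ _ _ (hmA j) hsA
      have d1 : h ∣ m i + 1 + s := (hper i0).1 _ (by omega) c1
      have d2 : h ∣ m j + s := (hper i0).1 _ (by have := hmpos j; omega) c2
      have t2 : (2:ℕ) ∣ h := even_iff_two_dvd.mp hEven
      have e1 : Even (m i + 1 + s) := even_iff_two_dvd.mpr (dvd_trans t2 d1)
      have e2 : Even (m j + s) := even_iff_two_dvd.mpr (dvd_trans t2 d2)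
      have p1 : ((-1:ℝ))^(m i + 1 + s) = 1 := e1.neg_one_pow
      have p2 : ((-1:ℝ))^(m j + s) = 1 := e2.neg_one_pow
      rw [pow_add, pow_add, pow_one] at p1
      rw [pow_add] at p2
      have q : ((-1:ℝ))^(m j) * (-1:ℝ)^s = -((-1:ℝ))^(m i) * (-1:ℝ)^s := by
        rw [p2]; linear_combination (-1:ℝ) * p1
      exact mul_right_cancel₀ (pow_ne_zero s (by norm_num : (-1:ℝ) ≠ 0)) q
    refine ⟨fun j => (-1:ℝ)^(m j) * k j, ?_, ?_⟩
    · intro hc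
      have := congrFun hc i0
      exact (mul_ne_zero (pow_ne_zero _ (by norm_num : (-1:ℝ) ≠ 0)) hi0) this
    · funext ii
      simp only [Matrix.mulVec, dotProduct, Pi.smul_apply, smul_eq_mul]
      have eterm : ∀ j ∈ Finset.univ, L ii j * ((-1:ℝ)^(m j) * k j)
          = -((-1:ℝ)^(m ii)) * (L ii j * k j) := by
        intro j _
        by_cases hij : A ii j = 0
        · rw [hL ii j, hij, zero_div]; ring
        · rw [hpar ii j hij]; ring
      rw [Finset.sum_congr rfl eterm, ← Finset.mul_sum, hLk ii]
      ring
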